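/- Let u : ℝⁿ × [0,∞) → ℝ satisfy: (i) 0 ≤ u(x,t) ≤ M·t for all (x,t); (ii) |u(x,t)−u(y,t)| ≤ ω(|x−y|) for a modulus of continuity ω; (iii) |u(x,t)−u(x,s)| ≤ C|t−s|; (iv) for each t > 0, sup over ℝⁿ×[0,t] of u is attained at some point (x_t,s_t) with |x_t| ≤ R₀. If m(t) := sup_x u(x,t) satisfies m(t)/t → c > 0 as t → ∞, then for every x ∈ ℝⁿ, u(x,t)/t → c as t → ∞. -/

import Mathlib

set_option maxHeartbeats 1000000 in
/-- If a nonnegative function `u` with linear growth, a spatial modulus of continuity,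
a time Lipschitz bound, and suprema attained in a fixed ball satisfies
`m(t)/t → c > 0` for `m(t) = sup_x u(x,t)`, then `u(x,t)/t → c` for every `x`. -/
theorem stmt_3 {n : ℕ} (u : EuclideanSpace ℝ (Fin n) → ℝ → ℝ)
    (M C R₀ c : ℝ) (ω : ℝ → ℝ) (m : ℝ → ℝ)
    (hM : 0 < M) (hC : 0 < C) (hR₀ : 0 < R₀) (hc : 0 < c)
    (hω_cont : Continuous ω) (hω_mono : Monotone ω) (hω0 : ω 0 = 0)
    (hω_nonneg : ∀ r, 0 ≤ r → 0 ≤ ω r)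
    (hbound : ∀ x t, 0 ≤ t → 0 ≤ u x t ∧ u x t ≤ M * t)
    (hspace : ∀ x y t, 0 ≤ t → |u x t - u y t| ≤ ω ‖x - y‖)
    (htime : ∀ x s t, 0 ≤ s → 0 ≤ t → |u x t - u x s| ≤ C * |t - s|)
    (hmax : ∀ t, 0 < t → ∃ x_t s_t, ‖x_t‖ ≤ R₀ ∧ s_t ∈ Set.Icc (0 : ℝ) t ∧
      ∀ y τ, τ ∈ Set.Icc (0 : ℝ) t → u y τ ≤ u x_t s_t)
    (hm : ∀ t, 0 ≤ t → IsLUB (Set.range fun x => u x t) (m t))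
    (hlim : Filter.Tendsto (fun t => m t / t) Filter.atTop (nhds c)) :
    ∀ x, Filter.Tendsto (fun t => u x t / t) Filter.atTop (nhds c) := by
  intro x
  rw [Metric.tendsto_atTop] at hlim ⊢
  intro δ hδ
  set K := ω (‖x‖ + R₀) with hKdef
  have hK0 : 0 ≤ K := hω_nonneg _ (by positivity)
  set ε := min (c/2) (min (δ/4) (δ*c/(8*C))) with hεdef
  have hε0 : 0 < ε :=
    lt_min (by positivity) (lt_min (by positivity) (by positivity))
  obtain ⟨T₀, hT₀⟩ := hlim ε hε0
  set T := max T₀ 1 with hTdef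
  have hTpos : (0:ℝ) < T := lt_of_lt_of_le one_pos (le_max_right _ _)
  refine ⟨max (max T (2*M*T/c)) (4*K/δ + 1), ?_⟩
  intro t ht
  have ht1 : T ≤ t := le_trans (le_max_left _ _) (le_trans (le_max_left _ _) ht)
  have ht2 : 2*M*T/c ≤ t := le_trans (le_max_right _ _) (le_trans (le_max_left _ _) ht)
  have ht3 : 4*K/δ + 1 ≤ t := le_trans (le_max_right _ _) ht
  have htpos : 0 < t := lt_of_lt_of_le hTpos ht1
  obtain ⟨xt, st, hxt, hst, hmaxt⟩ := hmax t htpos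
  have hst0 : 0 ≤ st := hst.1
  have hstt : st ≤ t := hst.2
  have hub : m t ≤ u xt st := by
    apply (hm t htpos.le).2
    rintro _ ⟨y, rfl⟩
    exact hmaxt y t ⟨htpos.le, le_refl t⟩
  have hmt_est : ∀ s, T ≤ s → (c - ε)*s ≤ m s ∧ m s ≤ (c + ε)*s := by
    intro s hs
    have hspos : 0 < s := lt_of_lt_of_le hTpos hs
    have h := hT₀ s (le_trans (le_max_left _ _) hs)
    rw [Real.dist_eq, abs_lt] at h
    constructor
    · have h1 : c - ε < m s / s := by linarith [h.1]
      calc (c-ε)*s ≤ (m s / s) * s := by nlinarith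
        _ = m s := by field_simp
    · have h2 : m s / s < c + ε := by linarith [h.2]
      calc m s = (m s / s) * s := by field_simp
        _ ≤ (c+ε)*s := by nlinarith
  have hmt := hmt_est t ht1
  have hεc : ε ≤ c/2 := min_le_left _ _
  have hcε : 0 < c - ε := by linarith
  have hust : u xt st ≤ M * st := (hbound xt st hst0).2
  have hstT : T ≤ st := by
    have h1 : (c/2)*t ≤ M * st := by nlinarith [hmt.1]
    have h2 : M*T ≤ (c/2)*t := by
      have h3 := ht2
      rw [div_le_iff₀ hc] at h3
      nlinarith
    nlinarith
  have hstpos : 0 < st := lt_of_lt_of_le hTpos hstT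
  have h3 : u xt st ≤ m st := (hm st hst0).1 ⟨xt, rfl⟩
  have h4 : m t ≤ (c+ε)*st := le_trans hub (le_trans h3 (hmt_est st hstT).2)
  have h5 : (c-ε)*t ≤ (c+ε)*st := le_trans hmt.1 h4
  have h6 : t - st ≤ 2*ε*t/c := by
    rw [le_div_iff₀ hc]
    linarith [h5, mul_nonneg hε0.le (sub_nonneg.2 hstt), mul_le_mul_of_nonneg_left hstt hε0.le]
  have h7 : |u x t - u x st| ≤ C * |t - st| := htime x st t hst0 htpos.le
  have h8 : u xt st - K ≤ u x st := by
    have hsp := hspace xt x st hst0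
    have hωb : ω ‖xt - x‖ ≤ K := by
      apply hω_mono
      calc ‖xt - x‖ ≤ ‖xt‖ + ‖x‖ := norm_sub_le _ _
        _ ≤ ‖x‖ + R₀ := by linarith
    have habs := abs_le.1 hsp
    linarith [habs.1]
  have habs : |t - st| = t - st := abs_of_nonneg (by linarith)
  have h9 : m t - K - C*(2*ε*t/c) ≤ u x t := by
    have h10 := (abs_le.1 h7).1
    have hC2 : C * |t - st| ≤ C * (2*ε*t/c) := by
      rw [habs]; exact mul_le_mul_of_nonneg_left h6 hC.le
    linarith
  have hut_up : u x t ≤ m t := (hm t htpos.le).1 ⟨x, rfl⟩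
  have hεδ : ε ≤ δ/4 := le_trans (min_le_right _ _) (min_le_left _ _)
  have hεC : ε ≤ δ*c/(8*C) := le_trans (min_le_right _ _) (min_le_right _ _)
  have hKb : K ≤ (δ/4)*t := by
    have h11 : 4*K/δ ≤ t - 1 := by linarith
    rw [div_le_iff₀ hδ] at h11
    nlinarith
  rw [Real.dist_eq, abs_lt]
  constructor
  · have h2Cε : 2*C*ε/c ≤ δ/4 := by
      rw [div_le_iff₀ hc]
      rw [le_div_iff₀ (by positivity : (0:ℝ) < 8*C)] at hεC
      nlinarith
    have hCb : C*(2*ε*t/c) ≤ (δ/4)*t := by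
      have heq : C*(2*ε*t/c) = (2*C*ε/c)*t := by field_simp
      rw [heq]
      exact mul_le_mul_of_nonneg_right h2Cε htpos.le
    have hlow : (c - ε - δ/4 - δ/4) ≤ u x t / t := by
      rw [le_div_iff₀ htpos]
      nlinarith [hmt.1]
    linarith
  · have hup : u x t / t ≤ m t / t := by
      gcongr
    have hmtup : m t / t ≤ c + ε := by
      rw [div_le_iff₀ htpos]
      exact hmt.2
    linarith
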